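/- arXiv:1201.6610 — 2 statements merged into one kernel-verified Lean document; each statement's English description precedes it below -/
import Mathlib

section
/- For every n ≥ 1 and every reflection h in O(2), the normaliser in O(2) of the dihedral subgroup D^h_{2n} (generated by the rotations of order dividing n and the reflection h) is the dihedral group D^h_{4n}, and consequently the Weyl group N_{O(2)}(D^h_{2n})/D^h_{2n} has order 2. -/
/-- The group `O(2)` of `2 × 2` real orthogonal matrices. -/
abbrev O2 : Type := Matrix.orthogonalGroup (Fin 2) ℝ

/-- The determinant, as a group homomorphism `O(2) → ℝ`. -/
noncomputable def detHom : O2 →* ℝ where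
  toFun g := Matrix.det (g : Matrix (Fin 2) (Fin 2) ℝ)
  map_one' := by simp
  map_mul' a b := by
    rw [show ((a * b : O2) : Matrix (Fin 2) (Fin 2) ℝ) = (a : Matrix (Fin 2) (Fin 2) ℝ) * (b : Matrix (Fin 2) (Fin 2) ℝ) from rfl, Matrix.det_mul]

/-- The rotation subgroup `SO(2)`, consisting of the orthogonal matrices of
determinant one. -/
noncomputable def SO2 : Subgroup O2 := detHom.ker

/-- The cyclic group `C_n` of rotations of order (dividing) `n`: the subgroup
generated by (equivalently, consisting of) the rotations `g` with `g ^ n = 1`. -/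
noncomputable def Cyc (n : ℕ) : Subgroup O2 :=
  Subgroup.closure {g : O2 | g ∈ SO2 ∧ g ^ n = 1}

/-- The dihedral subgroup `D^h_{2n}` generated by the cyclic rotation group `C_n`
together with the reflection `h`. -/
noncomputable def Dih (h : O2) (n : ℕ) : Subgroup O2 :=
  Subgroup.closure ({g : O2 | g ∈ SO2 ∧ g ^ n = 1} ∪ {h})

namespace AuxO2

lemma detHom_apply (g : O2) : detHom g = Matrix.det (g : Matrix (Fin 2) (Fin 2) ℝ) := rfl

lemma mem_SO2_iff {g : O2} : g ∈ SO2 ↔ detHom g = 1 := detHom.mem_ker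

lemma row_eqs (g : O2) :
    (g : Matrix (Fin 2) (Fin 2) ℝ) 0 0 * (g : Matrix (Fin 2) (Fin 2) ℝ) 0 0
      + (g : Matrix (Fin 2) (Fin 2) ℝ) 0 1 * (g : Matrix (Fin 2) (Fin 2) ℝ) 0 1 = 1 ∧
    (g : Matrix (Fin 2) (Fin 2) ℝ) 0 0 * (g : Matrix (Fin 2) (Fin 2) ℝ) 1 0
      + (g : Matrix (Fin 2) (Fin 2) ℝ) 0 1 * (g : Matrix (Fin 2) (Fin 2) ℝ) 1 1 = 0 := by
  have h := Matrix.mem_unitaryGroup_iff.mp g.2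
  have h00 := congrFun (congrFun h 0) 0
  have h01 := congrFun (congrFun h 0) 1
  simp [Matrix.mul_apply, Fin.sum_univ_two, Matrix.star_eq_conjTranspose,
    Matrix.conjTranspose_apply, Matrix.one_apply] at h00 h01
  constructor <;> linarith

lemma det_eq (g : O2) :
    (g : Matrix (Fin 2) (Fin 2) ℝ) 0 0 * (g : Matrix (Fin 2) (Fin 2) ℝ) 1 1
      - (g : Matrix (Fin 2) (Fin 2) ℝ) 0 1 * (g : Matrix (Fin 2) (Fin 2) ℝ) 1 0 = detHom g := by
  rw [detHom_apply, Matrix.det_fin_two]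

/-- rotation form -/
lemma rot_form (g : O2) (hg : detHom g = 1) :
    ∃ a b : ℝ, a * a + b * b = 1 ∧ (g : Matrix (Fin 2) (Fin 2) ℝ) = !![a, -b; b, a] := by
  obtain ⟨h1, h2⟩ := row_eqs g
  have h3 := det_eq g
  rw [hg] at h3
  set M := (g : Matrix (Fin 2) (Fin 2) ℝ)
  refine ⟨M 0 0, -(M 0 1), by linear_combination h1, ?_⟩
  have hd : M 1 1 = M 0 0 := by
    linear_combination M 0 0 * h3 + M 0 1 * h2 - M 1 1 * h1
  have hc : M 1 0 = -(M 0 1) := by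
    linear_combination (-(M 0 1)) * h3 + M 0 0 * h2 - M 1 0 * h1
  ext i j
  fin_cases i <;> fin_cases j <;>
    simp [Matrix.cons_val', Matrix.cons_val_zero, Matrix.cons_val_one, hd, hc]

/-- reflection form -/
lemma refl_form (g : O2) (hg : detHom g = -1) :
    ∃ a b : ℝ, a * a + b * b = 1 ∧ (g : Matrix (Fin 2) (Fin 2) ℝ) = !![a, b; b, -a] := by
  obtain ⟨h1, h2⟩ := row_eqs g
  have h3 := det_eq g
  rw [hg] at h3
  set M := (g : Matrix (Fin 2) (Fin 2) ℝ)
  refine ⟨M 0 0, M 0 1, h1, ?_⟩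
  have hd : M 1 1 = -(M 0 0) := by
    linear_combination M 0 0 * h3 + M 0 1 * h2 - M 1 1 * h1
  have hc : M 1 0 = M 0 1 := by
    linear_combination (-(M 0 1)) * h3 + M 0 0 * h2 - M 1 0 * h1
  ext i j
  fin_cases i <;> fin_cases j <;>
    simp [Matrix.cons_val', Matrix.cons_val_zero, Matrix.cons_val_one, hd, hc]

lemma so2_comm {a b : O2} (ha : a ∈ SO2) (hb : b ∈ SO2) : a * b = b * a := by
  obtain ⟨x, y, hxy, hA⟩ := rot_form a (mem_SO2_iff.mp ha)
  obtain ⟨u, v, huv, hB⟩ := rot_form b (mem_SO2_iff.mp hb)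
  apply Subtype.ext
  show (a : Matrix (Fin 2) (Fin 2) ℝ) * b = (b : Matrix (Fin 2) (Fin 2) ℝ) * a
  rw [hA, hB]
  ext i j
  fin_cases i <;> fin_cases j <;> simp [Matrix.mul_apply, Fin.sum_univ_two] <;> ring

lemma refl_sq {g : O2} (hg : detHom g = -1) : g * g = 1 := by
  obtain ⟨a, b, hab, hA⟩ := refl_form g hg
  apply Subtype.ext
  show (g : Matrix (Fin 2) (Fin 2) ℝ) * g = (1 : Matrix (Fin 2) (Fin 2) ℝ)
  rw [hA]
  ext i j
  fin_cases i <;> fin_cases j <;>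
    simp [Matrix.mul_apply, Fin.sum_univ_two, Matrix.one_apply] <;> nlinarith

lemma refl_inv {g : O2} (hg : detHom g = -1) : g⁻¹ = g :=
  inv_eq_of_mul_eq_one_right (refl_sq hg)

lemma rot_sq_one {g : O2} (hg : g ∈ SO2) (hsq : g * g = 1) :
    (g : Matrix (Fin 2) (Fin 2) ℝ) = 1 ∨ (g : Matrix (Fin 2) (Fin 2) ℝ) = -1 := by
  obtain ⟨a, b, hab, hA⟩ := rot_form g (mem_SO2_iff.mp hg)
  have h : (g : Matrix (Fin 2) (Fin 2) ℝ) * g = (1 : Matrix (Fin 2) (Fin 2) ℝ) :=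
    congrArg Subtype.val hsq
  rw [hA] at h
  have h00 := congrFun (congrFun h 0) 0
  have h01 := congrFun (congrFun h 0) 1
  simp [Matrix.mul_apply, Fin.sum_univ_two, Matrix.one_apply] at h00 h01
  have hb : b = 0 := by nlinarith
  have ha : a = 1 ∨ a = -1 := by
    rcases mul_self_eq_one_iff.mp (by nlinarith : a * a = 1) with h' | h'
    · exact Or.inl h'
    · exact Or.inr h'
  rcases ha with h' | h'
  · left; rw [hA, hb, h']; ext i j; fin_cases i <;> fin_cases j <;> simp [Matrix.one_apply]
  · right; rw [hA, hb, h']; ext i j; fin_cases i <;> fin_cases j <;> simp [Matrix.one_apply]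

/-- conjugation of a rotation by a reflection inverts it -/
lemma conj_refl {h g : O2} (hh : detHom h = -1) (hg : g ∈ SO2) : h * g * h = g⁻¹ := by
  have hdet : detHom (h * g) = -1 := by
    rw [map_mul, hh, mem_SO2_iff.mp hg]; ring
  have hsq := refl_sq hdet
  have : h * g * (h * g) = 1 := hsq
  calc h * g * h = h * g * (h * g) * g⁻¹ := by group
    _ = g⁻¹ := by rw [this]; group

end AuxO2

namespace AuxO2

/-- conjugation corollary: `h * g * h = g⁻¹` variants -/
lemma conj_refl' {h g : O2} (hh : detHom h = -1) (hg : g ∈ SO2) : h * g⁻¹ * h = g := by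
  have := conj_refl hh (SO2.inv_mem hg)
  rwa [inv_inv] at this

set_option maxHeartbeats 1000000 in
lemma mem_dih_iff {h : O2} (hh : detHom h = -1) {n : ℕ} {g : O2} :
    g ∈ Dih h n ↔ (g ∈ SO2 ∧ g ^ n = 1) ∨ ∃ s : O2, (s ∈ SO2 ∧ s ^ n = 1) ∧ g = h * s := by
  have hh2 : h * h = 1 := refl_sq hh
  constructor
  · intro hg
    refine Subgroup.closure_induction ?_ ?_ ?_ ?_ hg
    · rintro x (⟨hx1, hx2⟩ | hx)
      · exact Or.inl ⟨hx1, hx2⟩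
      · refine Or.inr ⟨1, ⟨SO2.one_mem, one_pow n⟩, ?_⟩
        simp at hx; rw [hx, mul_one]
    · exact Or.inl ⟨SO2.one_mem, one_pow n⟩
    · rintro x y hx hy (⟨hx1, hx2⟩ | ⟨s, ⟨hs1, hs2⟩, rfl⟩) (⟨hy1, hy2⟩ | ⟨t, ⟨ht1, ht2⟩, rfl⟩)
      · exact Or.inl ⟨SO2.mul_mem hx1 hy1,
          by rw [(Commute.mul_pow (so2_comm hx1 hy1) n : (x*y)^n = _), hx2, hy2, one_mul]⟩
      · -- x * (h * t) = h * (x⁻¹ * t)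
        refine Or.inr ⟨x⁻¹ * t, ⟨SO2.mul_mem (SO2.inv_mem hx1) ht1, ?_⟩, ?_⟩
        · rw [Commute.mul_pow (so2_comm (SO2.inv_mem hx1) ht1), inv_pow, hx2, inv_one, one_mul, ht2]
        · have : x * h = h * x⁻¹ := by
            have := conj_refl hh hx1
            calc x * h = h * (h * x * h) := by rw [← mul_assoc, ← mul_assoc, hh2, one_mul]
              _ = h * x⁻¹ := by rw [this]
          rw [← mul_assoc, this, mul_assoc]
      · exact Or.inr ⟨s * y, ⟨SO2.mul_mem hs1 hy1,
          by rw [Commute.mul_pow (so2_comm hs1 hy1), hs2, hy2, one_mul]⟩, by rw [mul_assoc]⟩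
      · -- (h*s) * (h*t) = (h*s*h) * t = s⁻¹ * t
        have key : h * s * (h * t) = s⁻¹ * t := by
          rw [show h * s * (h * t) = (h * s * h) * t by group, conj_refl hh hs1]
        rw [key]
        refine Or.inl ⟨SO2.mul_mem (SO2.inv_mem hs1) ht1, ?_⟩
        rw [Commute.mul_pow (so2_comm (SO2.inv_mem hs1) ht1), inv_pow, hs2, inv_one,
          one_mul, ht2]
    · rintro x hx (⟨hx1, hx2⟩ | ⟨s, ⟨hs1, hs2⟩, rfl⟩)
      · exact Or.inl ⟨SO2.inv_mem hx1, by rw [inv_pow, hx2, inv_one]⟩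
      · have key : (h * s)⁻¹ = h * s := by
          rw [mul_inv_rev, refl_inv hh]
          have hc := conj_refl' hh hs1
          calc s⁻¹ * h = h * (h * s⁻¹ * h) := by rw [← mul_assoc, ← mul_assoc, hh2, one_mul]
            _ = h * s := by rw [hc]
        rw [key]
        exact Or.inr ⟨s, ⟨hs1, hs2⟩, rfl⟩
  · rintro (⟨h1, h2⟩ | ⟨s, ⟨hs1, hs2⟩, rfl⟩)
    · exact Subgroup.subset_closure (Or.inl ⟨h1, h2⟩)
    · exact Subgroup.mul_mem _ (Subgroup.subset_closure (Or.inr rfl))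
        (Subgroup.subset_closure (Or.inl ⟨hs1, hs2⟩))

end AuxO2

namespace AuxO2
open Real

/-- rotation matrix -/
noncomputable def rotM (θ : ℝ) : Matrix (Fin 2) (Fin 2) ℝ :=
  !![Real.cos θ, -Real.sin θ; Real.sin θ, Real.cos θ]

lemma rotM_mul (a b : ℝ) : rotM a * rotM b = rotM (a + b) := by
  unfold rotM
  ext i j
  fin_cases i <;> fin_cases j <;>
    simp [Matrix.mul_apply, Fin.sum_univ_two, Real.cos_add, Real.sin_add] <;> ring

lemma rotM_zero : rotM 0 = 1 := by
  unfold rotM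
  ext i j
  fin_cases i <;> fin_cases j <;> simp [Matrix.one_apply]

lemma rotM_mem (θ : ℝ) : rotM θ ∈ Matrix.orthogonalGroup (Fin 2) ℝ := by
  apply Matrix.mem_unitaryGroup_iff.mpr
  have : star (rotM θ) = rotM (-θ) := by
    unfold rotM
    ext i j
    fin_cases i <;> fin_cases j <;>
      simp [Matrix.star_eq_conjTranspose, Matrix.conjTranspose_apply]
  rw [this, rotM_mul, add_neg_cancel, rotM_zero]

/-- rotation element of O2 -/
noncomputable def rotE (θ : ℝ) : O2 := ⟨rotM θ, rotM_mem θ⟩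

lemma rotE_pow (θ : ℝ) (k : ℕ) : rotE θ ^ k = rotE (k * θ) := by
  induction k with
  | zero => simp [rotE]; apply Subtype.ext; show (1 : Matrix (Fin 2) (Fin 2) ℝ) = rotM 0; rw [rotM_zero]
  | succ m ih =>
    rw [pow_succ, ih]
    apply Subtype.ext
    show rotM (m * θ) * rotM θ = rotM ((m + 1 : ℕ) * θ)
    rw [rotM_mul]
    push_cast
    ring

lemma rotE_det (θ : ℝ) : detHom (rotE θ) = 1 := by
  rw [detHom_apply]
  show Matrix.det (rotM θ) = 1
  unfold rotM
  rw [Matrix.det_fin_two_of]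
  nlinarith [Real.sin_sq_add_cos_sq θ]

lemma rotE_mem_SO2 (θ : ℝ) : rotE θ ∈ SO2 := mem_SO2_iff.mpr (rotE_det θ)

lemma rotM_pi : rotM π = -1 := by
  unfold rotM
  ext i j
  fin_cases i <;> fin_cases j <;> simp [Matrix.one_apply]

end AuxO2

namespace AuxO2
open Real

lemma det_pm (g : O2) : detHom g = 1 ∨ detHom g = -1 := by
  have h := congrArg Matrix.det (Matrix.mem_unitaryGroup_iff.mp g.2)
  rw [Matrix.det_mul, Matrix.star_eq_conjTranspose, Matrix.det_conjTranspose, star_trivial,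
    Matrix.det_one] at h
  exact mul_self_eq_one_iff.mp h

lemma det_inv {g : O2} : detHom g⁻¹ = detHom g := by
  have h : detHom g * detHom g⁻¹ = 1 := by rw [← map_mul, mul_inv_cancel, map_one]
  rcases det_pm g with h1 | h1 <;> rw [h1] at h ⊢ <;> linarith

lemma refl_swap {h x : O2} (hh : detHom h = -1) (hx : x ∈ SO2) : x * h = h * x⁻¹ := by
  have hh2 : h * h = 1 := refl_sq hh
  have hc := conj_refl hh hx
  calc x * h = h * (h * x * h) := by rw [← mul_assoc, ← mul_assoc, hh2, one_mul]
    _ = h * x⁻¹ := by rw [hc]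

lemma conj_mem_dih {h : O2} (hh : detHom h = -1) {n : ℕ} {r : O2} (hr : r ∈ SO2)
    (hr2 : r ^ (2 * n) = 1) {b : O2} (hb : b ∈ Dih h n) : r * b * r⁻¹ ∈ Dih h n := by
  rcases (mem_dih_iff hh).mp hb with ⟨hb1, hb2⟩ | ⟨s, ⟨hs1, hs2⟩, rfl⟩
  · rw [so2_comm hr hb1, mul_inv_cancel_right]
    exact hb
  · -- r * (h * s) * r⁻¹ = h * (r⁻¹ * (r⁻¹ * s))
    have hrinv : r⁻¹ ∈ SO2 := SO2.inv_mem hr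
    have key : r * (h * s) * r⁻¹ = h * (r⁻¹ * (r⁻¹ * s)) := by
      rw [← mul_assoc, refl_swap hh hr, mul_assoc (h * r⁻¹) s r⁻¹, so2_comm hs1 hrinv]
      group
    rw [key]
    apply (mem_dih_iff hh).mpr
    refine Or.inr ⟨r⁻¹ * (r⁻¹ * s), ⟨SO2.mul_mem hrinv (SO2.mul_mem hrinv hs1), ?_⟩, rfl⟩
    rw [Commute.mul_pow (so2_comm hrinv (SO2.mul_mem hrinv hs1)),
      Commute.mul_pow (so2_comm hrinv hs1), hs2, mul_one, inv_pow,
      ← mul_inv_rev, ← pow_add, ← two_mul, hr2, inv_one]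

lemma normalizer_ge {h : O2} (hh : detHom h = -1) {n : ℕ} :
    Dih h (2 * n) ≤ (Subgroup.normalizer (Dih h n : Set O2)) := by
  rw [Dih, Subgroup.closure_le]
  rintro r (⟨hr1, hr2⟩ | hr)
  · rw [SetLike.mem_coe, Subgroup.mem_normalizer_iff]
    intro b
    constructor
    · intro hb; exact conj_mem_dih hh hr1 hr2 hb
    · intro hb
      have h2 := conj_mem_dih hh (SO2.inv_mem hr1) (by rw [inv_pow, hr2, inv_one]) hb
      rwa [show r⁻¹ * (r * b * r⁻¹) * r⁻¹⁻¹ = b by group] at h2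
  · simp only [Set.mem_singleton_iff] at hr
    subst hr
    exact Subgroup.le_normalizer ((mem_dih_iff hh).mpr
      (Or.inr ⟨1, ⟨SO2.one_mem, one_pow n⟩, (mul_one r).symm⟩))

lemma h_mem_dih {h : O2} (hh : detHom h = -1) (n : ℕ) : h ∈ Dih h n :=
  (mem_dih_iff hh).mpr (Or.inr ⟨1, ⟨SO2.one_mem, one_pow n⟩, (mul_one h).symm⟩)

lemma normalizer_le_rot {h : O2} (hh : detHom h = -1) {n : ℕ} {g : O2}
    (hgN : g ∈ (Subgroup.normalizer (Dih h n : Set O2))) (hg : detHom g = 1) : g ∈ Dih h (2 * n) := by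
  have hgS : g ∈ SO2 := mem_SO2_iff.mpr hg
  have hconj : g * h * g⁻¹ ∈ Dih h n :=
    ((Subgroup.mem_normalizer_iff.mp hgN) h).mp (h_mem_dih hh n)
  rcases (mem_dih_iff hh).mp hconj with ⟨hc1, _⟩ | ⟨s, ⟨hs1, hs2⟩, hc⟩
  · exfalso
    have : detHom (g * h * g⁻¹) = 1 := mem_SO2_iff.mp hc1
    rw [map_mul, map_mul, hg, hh, det_inv, hg] at this
    norm_num at this
  · -- g * h * g⁻¹ = g * (g * h)
    have key : g * h * g⁻¹ = g * (g * h) := by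
      have h1 : h * g⁻¹ = g * h := by
        have := conj_refl' hh hgS
        calc h * g⁻¹ = h * g⁻¹ * h * h := by rw [mul_assoc, refl_sq hh, mul_one]
          _ = g * h := by rw [this]
      rw [mul_assoc, h1]
    rw [key] at hc
    -- g * (g * h) = h * s  ⇒  g * g = h * s * h⁻¹ = s⁻¹
    have hgg : g * g = s⁻¹ := by
      have h2 : g * g = h * s * h⁻¹ := by rw [← hc]; group
      rw [h2, refl_inv hh]
      exact conj_refl hh hs1
    have hpow : g ^ (2 * n) = 1 := by
      rw [pow_mul, pow_two, hgg, inv_pow, hs2, inv_one]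
    exact Subgroup.subset_closure (Or.inl ⟨hgS, hpow⟩)

lemma normalizer_le {h : O2} (hh : detHom h = -1) {n : ℕ} {g : O2}
    (hgN : g ∈ (Subgroup.normalizer (Dih h n : Set O2))) : g ∈ Dih h (2 * n) := by
  rcases det_pm g with hg | hg
  · exact normalizer_le_rot hh hgN hg
  · have hghN : g * h ∈ (Subgroup.normalizer (Dih h n : Set O2)) :=
      Subgroup.mul_mem _ hgN (Subgroup.le_normalizer (h_mem_dih hh n))
    have hgh : detHom (g * h) = 1 := by rw [map_mul, hg, hh]; norm_num
    have h1 : g * h ∈ Dih h (2 * n) := normalizer_le_rot hh hghN hgh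
    have h2 : h ∈ Dih h (2 * n) := h_mem_dih hh (2 * n)
    have h3 : g = g * h * h := by rw [mul_assoc, refl_sq hh, mul_one]
    rw [h3]
    exact Subgroup.mul_mem _ h1 h2
  
end AuxO2

namespace AuxO2
open Real

variable {n : ℕ} (hn : 1 ≤ n)

lemma pn_coe (hn : 1 ≤ n) :
    ((rotE (π / n) ^ n : O2) : Matrix (Fin 2) (Fin 2) ℝ) = -1 := by
  have hne : (n : ℝ) ≠ 0 := Nat.cast_ne_zero.mpr (by omega)
  rw [rotE_pow]
  show rotM ((n : ℝ) * (π / n)) = -1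
  rw [show (n : ℝ) * (π / n) = π by field_simp, rotM_pi]

lemma p2n (hn : 1 ≤ n) : (rotE (π / n)) ^ (2 * n) = 1 := by
  have hne : (n : ℝ) ≠ 0 := Nat.cast_ne_zero.mpr (by omega)
  rw [rotE_pow]
  apply Subtype.ext
  show rotM (((2 * n : ℕ) : ℝ) * (π / n)) = 1
  rw [show ((2 * n : ℕ) : ℝ) * (π / n) = 2 * π by push_cast; field_simp]
  unfold rotM
  ext i j
  fin_cases i <;> fin_cases j <;>
    simp [Real.cos_two_pi, Real.sin_two_pi, Matrix.one_apply]

lemma p_not_mem {h : O2} (hh : detHom h = -1) (hn : 1 ≤ n) : rotE (π / n) ∉ Dih h n := by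
  intro hmem
  rcases (mem_dih_iff hh).mp hmem with ⟨_, hpow⟩ | ⟨s, ⟨hs1, _⟩, hc⟩
  · have h1 : ((rotE (π / n) ^ n : O2) : Matrix (Fin 2) (Fin 2) ℝ) = 1 := by
      rw [hpow]; rfl
    rw [pn_coe hn] at h1
    have := congrFun (congrFun h1 0) 0
    norm_num [Matrix.one_apply] at this
  · have : detHom (rotE (π / n)) = -1 := by
      rw [hc, map_mul, hh, mem_SO2_iff.mp hs1]; ring
    rw [rotE_det] at this
    norm_num at this

lemma cover {h : O2} (hh : detHom h = -1) (hn : 1 ≤ n) {g : O2} (hg : g ∈ Dih h (2 * n)) :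
    g ∈ Dih h n ∨ (rotE (π / n))⁻¹ * g ∈ Dih h n := by
  set p := rotE (π / n) with hp
  have hpS : p ∈ SO2 := rotE_mem_SO2 _
  rcases (mem_dih_iff hh).mp hg with ⟨hg1, hg2⟩ | ⟨s, ⟨hs1, hs2⟩, rfl⟩
  · -- rotation case
    have hsq : g ^ n * g ^ n = 1 := by rw [← pow_add, ← two_mul, hg2]
    rcases rot_sq_one (Subgroup.pow_mem _ hg1 n) hsq with h1 | h1
    · left
      exact (mem_dih_iff hh).mpr (Or.inl ⟨hg1, Subtype.ext h1⟩)
    · right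
      have heq : g ^ n = p ^ n := Subtype.ext (by rw [h1, pn_coe hn])
      refine (mem_dih_iff hh).mpr (Or.inl ⟨SO2.mul_mem (SO2.inv_mem hpS) hg1, ?_⟩)
      rw [Commute.mul_pow (so2_comm (SO2.inv_mem hpS) hg1), inv_pow, ← heq, inv_mul_cancel]
  · -- reflection case
    have hsq : s ^ n * s ^ n = 1 := by rw [← pow_add, ← two_mul, hs2]
    rcases rot_sq_one (Subgroup.pow_mem _ hs1 n) hsq with h1 | h1
    · left
      exact (mem_dih_iff hh).mpr (Or.inr ⟨s, ⟨hs1, Subtype.ext h1⟩, rfl⟩)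
    · right
      have heq : s ^ n = p ^ n := Subtype.ext (by rw [h1, pn_coe hn])
      have key : p⁻¹ * (h * s) = h * (p * s) := by
        rw [← mul_assoc, refl_swap hh (SO2.inv_mem hpS), inv_inv, mul_assoc]
      rw [key]
      refine (mem_dih_iff hh).mpr (Or.inr ⟨p * s, ⟨SO2.mul_mem hpS hs1, ?_⟩, rfl⟩)
      rw [Commute.mul_pow (so2_comm hpS hs1), heq, ← pow_add, ← two_mul, p2n hn]

end AuxO2




open AuxO2 Real

/-- For `n ≥ 1` and a reflection `h` in `O(2)`, the normaliser of the dihedral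
subgroup `D^h_{2n}` is the dihedral group `D^h_{4n}`, and hence the Weyl group
`N_{O(2)}(D^h_{2n}) / D^h_{2n}` has order `2`. -/
theorem normalizer_dihedral (n : ℕ) (hn : 1 ≤ n) (h : O2) (hrefl : detHom h = -1) :
    Subgroup.normalizer (Dih h n : Set O2) = Dih h (2 * n) ∧
      Nat.card
        (Subgroup.normalizer (Dih h n : Set O2) ⧸ (Dih h n).subgroupOf (Subgroup.normalizer (Dih h n : Set O2))) = 2 := by
  have hNeq : (Subgroup.normalizer (Dih h n : Set O2)) = Dih h (2 * n) :=
    le_antisymm (fun g hg => normalizer_le hrefl hg) (normalizer_ge hrefl)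
  refine ⟨hNeq, ?_⟩
  set p := rotE (π / n) with hp
  have hpN : p ∈ (Subgroup.normalizer (Dih h n : Set O2)) := by
    rw [hNeq]
    exact Subgroup.subset_closure (Or.inl ⟨rotE_mem_SO2 _, p2n hn⟩)
  rw [Nat.card_eq_two_iff]
  refine ⟨QuotientGroup.mk 1, QuotientGroup.mk ⟨p, hpN⟩, ?_, ?_⟩
  · intro heq
    rw [QuotientGroup.eq] at heq
    rw [Subgroup.mem_subgroupOf] at heq
    apply p_not_mem hrefl hn
    simpa using heq
  · rw [Set.eq_univ_iff_forall]
    intro z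
    obtain ⟨g, rfl⟩ := QuotientGroup.mk_surjective z
    have hg2n : (g : O2) ∈ Dih h (2 * n) := by rw [← hNeq]; exact g.2
    rcases cover hrefl hn hg2n with h1 | h1
    · left
      show QuotientGroup.mk g = QuotientGroup.mk 1
      rw [QuotientGroup.eq, Subgroup.mem_subgroupOf]
      simpa using Subgroup.inv_mem _ h1
    · right
      show QuotientGroup.mk g = QuotientGroup.mk (⟨p, hpN⟩ : (Subgroup.normalizer (Dih h n : Set O2)))
      rw [QuotientGroup.eq, Subgroup.mem_subgroupOf]
      have : ((g⁻¹ * ⟨p, hpN⟩ : (Subgroup.normalizer (Dih h n : Set O2))) : O2) = (g : O2)⁻¹ * p := rfl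
      rw [this]
      have := Subgroup.inv_mem _ h1
      rwa [mul_inv_rev, inv_inv] at this
end

section
/- Let R be a commutative ring, M an R-module, and S ⊆ R a multiplicatively closed set. If N is a finitely presented R-module, then the canonical map S^{−1} Hom_R(N, M) → Hom_R(N, S^{−1}M) is an isomorphism. -/
/-- Localisation of Hom: for a commutative ring `R`, a multiplicative set `S ⊆ R`,
an `R`-module `M` and a finitely presented `R`-module `N`, the canonical map
`S⁻¹ Hom_R(N, M) → Hom_R(N, S⁻¹M)` is an isomorphism.  This is expressed by
saying that the map `Hom_R(N, M) → Hom_R(N, S⁻¹M)`, given by postcomposition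
with the localisation map `M → S⁻¹M`, exhibits `Hom_R(N, S⁻¹M)` as the
localisation of `Hom_R(N, M)` at `S`. -/
theorem localized_hom_of_finitePresentation (R : Type*) [CommRing R] (S : Submonoid R)
    (M N : Type*) [AddCommGroup M] [Module R M] [AddCommGroup N] [Module R N]
    [Module.FinitePresentation R N] :
    IsLocalizedModule S
      ((LinearMap.llcomp (σ₁₂ := RingHom.id R) (σ₂₃ := RingHom.id R) (σ₁₃ := RingHom.id R)
        R N M (LocalizedModule S M)) (LocalizedModule.mkLinearMap S M)) := by
  have hmk : IsLocalizedModule S (LocalizedModule.mkLinearMap S M) := inferInstance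
  constructor
  · intro s
    rw [Module.End.isUnit_iff]
    have hu := (Module.End.isUnit_iff _).mp (hmk.map_units s)
    constructor
    · intro g₁ g₂ h
      ext x
      exact hu.1 (LinearMap.congr_fun h x)
    · intro g
      obtain ⟨u, hu'⟩ := hmk.map_units s
      refine ⟨((u⁻¹ : (Module.End R (LocalizedModule S M))ˣ) : Module.End R (LocalizedModule S M)) ∘ₗ g, ?_⟩
      ext x
      show (algebraMap R (Module.End R (LocalizedModule S M))) s
        (((u⁻¹ : (Module.End R (LocalizedModule S M))ˣ) :
          Module.End R (LocalizedModule S M)) (g x)) = g x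
      rw [← hu']
      exact congrArg (fun e : Module.End R (LocalizedModule S M) => e (g x)) u.mul_inv ▸
        (Module.End.mul_apply _ _ _).symm.trans
          (by rw [u.mul_inv]; rfl)
  · intro g
    obtain ⟨h, s, hs⟩ :=
      Module.FinitePresentation.exists_lift_of_isLocalizedModule S
        (LocalizedModule.mkLinearMap S M) g
    exact ⟨⟨h, s⟩, hs.symm⟩
  · intro g₁ g₂ h
    exact Module.Finite.exists_smul_of_comp_eq_of_isLocalizedModule S
      (LocalizedModule.mkLinearMap S M) g₁ g₂ h
end
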